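/- For all integers T, j, t with 2 ≤ j ≤ t ≤ T, one has (t/T)^j − ((t−1)/T)^j − j·∏_{s=1}^{j−1}(t−s) / ∏_{s=1}^{j}(T+1−s) ≤ j(j−1)^2/T^2. -/

import Mathlib

/-- Difference of powers bound: for `0 ≤ b ≤ a`, `a^n - b^n ≤ n * a^(n-1) * (a - b)`. -/
lemma pow_sub_pow_le_aux (n : ℕ) (a b : ℝ) (hb : 0 ≤ b) (hba : b ≤ a) :
    a ^ n - b ^ n ≤ (n : ℝ) * a ^ (n - 1) * (a - b) := by
  have ha : 0 ≤ a := hb.trans hba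
  rw [← geom_sum₂_mul a b n]
  have hsum : (∑ i ∈ Finset.range n, a ^ i * b ^ (n - 1 - i)) ≤ (n : ℝ) * a ^ (n - 1) := by
    calc (∑ i ∈ Finset.range n, a ^ i * b ^ (n - 1 - i))
        ≤ ∑ i ∈ Finset.range n, a ^ (n - 1) := by
          apply Finset.sum_le_sum
          intro i hi
          rw [Finset.mem_range] at hi
          calc a ^ i * b ^ (n - 1 - i) ≤ a ^ i * a ^ (n - 1 - i) := by
                exact mul_le_mul_of_nonneg_left (pow_le_pow_left₀ hb hba _) (pow_nonneg ha _)
            _ = a ^ (n - 1) := by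
                rw [← pow_add]
                congr 1
                omega
      _ = (n : ℝ) * a ^ (n - 1) := by
          rw [Finset.sum_const, Finset.card_range, nsmul_eq_mul]
  exact mul_le_mul_of_nonneg_right hsum (by linarith)

/-- For all integers `T, j, t` with `2 ≤ j ≤ t ≤ T`, the difference between the
increment of the càglàd probability-weighted-moment weights and the unbiased (order-statistics)
weights is bounded above by `j (j-1)² / T²`:
`(t/T)^j − ((t−1)/T)^j − j·∏_{s=1}^{j−1}(t−s) / ∏_{s=1}^{j}(T+1−s) ≤ j (j−1)² / T²`. -/
theorem pwm_weight_difference_upper_bound (T j t : ℕ) (hj : 2 ≤ j) (hjt : j ≤ t) (htT : t ≤ T) :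
    ((t : ℝ) / T) ^ j - (((t : ℝ) - 1) / T) ^ j
      - (j : ℝ) * (∏ s ∈ Finset.Icc 1 (j - 1), ((t : ℝ) - (s : ℝ)))
          / (∏ s ∈ Finset.Icc 1 j, ((T : ℝ) + 1 - (s : ℝ)))
      ≤ (j : ℝ) * ((j : ℝ) - 1) ^ 2 / (T : ℝ) ^ 2 := by
  have hT2 : 2 ≤ T := le_trans hj (le_trans hjt htT)
  have hTR : (2 : ℝ) ≤ (T : ℝ) := by exact_mod_cast hT2
  have hTpos : (0 : ℝ) < T := by linarith
  have htR : (j : ℝ) ≤ (t : ℝ) := by exact_mod_cast hjt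
  have htTR : (t : ℝ) ≤ (T : ℝ) := by exact_mod_cast htT
  have hjR : (2 : ℝ) ≤ (j : ℝ) := by exact_mod_cast hj
  have htpos : (0 : ℝ) < t := by linarith
  -- products
  set P := ∏ s ∈ Finset.Icc 1 (j - 1), ((t : ℝ) - (s : ℝ)) with hP
  set Q := ∏ s ∈ Finset.Icc 1 j, ((T : ℝ) + 1 - (s : ℝ)) with hQ
  have hcard1 : (Finset.Icc 1 (j - 1)).card = j - 1 := by
    rw [Nat.card_Icc]; omega
  have hcard2 : (Finset.Icc 1 j).card = j := by
    rw [Nat.card_Icc]; omega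
  have hPfac : ∀ s ∈ Finset.Icc 1 (j - 1), ((t : ℝ) - (j : ℝ) + 1) ≤ (t : ℝ) - (s : ℝ) := by
    intro s hs
    rw [Finset.mem_Icc] at hs
    have : (s : ℝ) ≤ (j : ℝ) - 1 := by
      have : s ≤ j - 1 := hs.2
      have := (Nat.cast_le (α := ℝ)).2 this
      have hj1 : ((j - 1 : ℕ) : ℝ) = (j : ℝ) - 1 := by
        have : 1 ≤ j := by omega
        push_cast [this]; ring
      linarith [hj1 ▸ ‹((s:ℕ):ℝ) ≤ ((j-1:ℕ):ℝ)›]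
    linarith
  have hbase : (1 : ℝ) ≤ (t : ℝ) - (j : ℝ) + 1 := by linarith
  have hPge : ((t : ℝ) - (j : ℝ) + 1) ^ (j - 1) ≤ P := by
    calc ((t : ℝ) - (j : ℝ) + 1) ^ (j - 1)
        = ∏ s ∈ Finset.Icc 1 (j - 1), ((t : ℝ) - (j : ℝ) + 1) := by
          rw [Finset.prod_const, hcard1]
      _ ≤ P := Finset.prod_le_prod (fun s hs => by linarith) hPfac
  have hPpos : 0 < P := by
    have := hPge
    nlinarith [pow_pos (show (0:ℝ) < (t : ℝ) - (j : ℝ) + 1 by linarith) (j - 1)]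
  have hQfac : ∀ s ∈ Finset.Icc 1 j, (T : ℝ) + 1 - (s : ℝ) ≤ (T : ℝ) := by
    intro s hs
    rw [Finset.mem_Icc] at hs
    have : (1 : ℝ) ≤ (s : ℝ) := by exact_mod_cast hs.1
    linarith
  have hQfacpos : ∀ s ∈ Finset.Icc 1 j, (0 : ℝ) ≤ (T : ℝ) + 1 - (s : ℝ) := by
    intro s hs
    rw [Finset.mem_Icc] at hs
    have : (s : ℝ) ≤ (j : ℝ) := by exact_mod_cast hs.2
    linarith
  have hQle : Q ≤ (T : ℝ) ^ j := by
    calc Q ≤ ∏ s ∈ Finset.Icc 1 j, (T : ℝ) := Finset.prod_le_prod hQfacpos hQfac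
      _ = (T : ℝ) ^ j := by rw [Finset.prod_const, hcard2]
  have hQpos : 0 < Q := by
    rw [hQ]
    apply Finset.prod_pos
    intro s hs
    rw [Finset.mem_Icc] at hs
    have : (s : ℝ) ≤ (j : ℝ) := by exact_mod_cast hs.2
    linarith
  -- Step 1: first difference ≤ j * t^(j-1) / T^j
  have hTj : (0 : ℝ) < (T : ℝ) ^ j := pow_pos hTpos j
  have step1 : ((t : ℝ) / T) ^ j - (((t : ℝ) - 1) / T) ^ j
      ≤ (j : ℝ) * (t : ℝ) ^ (j - 1) / (T : ℝ) ^ j := by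
    rw [div_pow, div_pow, div_sub_div_same]
    apply div_le_div_of_nonneg_right ?_ hTj.le |>.trans_eq rfl
    have := pow_sub_pow_le_aux j (t : ℝ) ((t : ℝ) - 1) (by linarith) (by linarith)
    calc (t : ℝ) ^ j - ((t : ℝ) - 1) ^ j ≤ (j : ℝ) * (t : ℝ) ^ (j - 1) * ((t:ℝ) - ((t:ℝ)-1)) := this
      _ = (j : ℝ) * (t : ℝ) ^ (j - 1) := by ring
  -- Step 2: subtracted term ≥ j * (t-j+1)^(j-1) / T^j
  have step2 : (j : ℝ) * ((t : ℝ) - (j : ℝ) + 1) ^ (j - 1) / (T : ℝ) ^ j ≤ (j : ℝ) * P / Q := by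
    apply div_le_div₀ (by positivity) ?_ hQpos hQle
    exact mul_le_mul_of_nonneg_left hPge (by linarith)
  -- Combine
  have key : ((t : ℝ) / T) ^ j - (((t : ℝ) - 1) / T) ^ j - (j : ℝ) * P / Q
      ≤ (j : ℝ) * ((t : ℝ) ^ (j - 1) - ((t : ℝ) - (j : ℝ) + 1) ^ (j - 1)) / (T : ℝ) ^ j := by
    have := sub_le_sub step1 step2
    calc ((t : ℝ) / T) ^ j - (((t : ℝ) - 1) / T) ^ j - (j : ℝ) * P / Q
        ≤ (j : ℝ) * (t : ℝ) ^ (j - 1) / (T : ℝ) ^ j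
          - (j : ℝ) * ((t : ℝ) - (j : ℝ) + 1) ^ (j - 1) / (T : ℝ) ^ j := this
      _ = (j : ℝ) * ((t : ℝ) ^ (j - 1) - ((t : ℝ) - (j : ℝ) + 1) ^ (j - 1)) / (T : ℝ) ^ j := by
          ring
  refine key.trans ?_
  -- Step 3: t^(j-1) - (t-j+1)^(j-1) ≤ (j-1)^2 * t^(j-2)
  have step3 : (t : ℝ) ^ (j - 1) - ((t : ℝ) - (j : ℝ) + 1) ^ (j - 1)
      ≤ ((j : ℝ) - 1) ^ 2 * (t : ℝ) ^ (j - 2) := by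
    have h := pow_sub_pow_le_aux (j - 1) (t : ℝ) ((t : ℝ) - (j : ℝ) + 1)
      (by linarith) (by linarith)
    have hjcast : ((j - 1 : ℕ) : ℝ) = (j : ℝ) - 1 := by
      have : 1 ≤ j := by omega
      push_cast [this]; ring
    have hidx : j - 1 - 1 = j - 2 := by omega
    rw [hjcast, hidx] at h
    calc (t : ℝ) ^ (j - 1) - ((t : ℝ) - (j : ℝ) + 1) ^ (j - 1)
        ≤ ((j : ℝ) - 1) * (t : ℝ) ^ (j - 2) * ((t:ℝ) - ((t:ℝ) - (j:ℝ) + 1)) := h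
      _ = ((j : ℝ) - 1) ^ 2 * (t : ℝ) ^ (j - 2) := by ring
  -- Step 4: conclude
  have ht2 : (t : ℝ) ^ (j - 2) ≤ (T : ℝ) ^ (j - 2) := pow_le_pow_left₀ (by positivity) htTR _
  have hTjsplit : (T : ℝ) ^ j = (T : ℝ) ^ (j - 2) * (T : ℝ) ^ 2 := by
    rw [← pow_add]
    congr 1
    omega
  calc (j : ℝ) * ((t : ℝ) ^ (j - 1) - ((t : ℝ) - (j : ℝ) + 1) ^ (j - 1)) / (T : ℝ) ^ j
      ≤ (j : ℝ) * (((j : ℝ) - 1) ^ 2 * (t : ℝ) ^ (j - 2)) / (T : ℝ) ^ j := by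
        apply div_le_div_of_nonneg_right ?_ hTj.le |>.trans_eq rfl
        exact mul_le_mul_of_nonneg_left step3 (by linarith)
    _ ≤ (j : ℝ) * (((j : ℝ) - 1) ^ 2 * (T : ℝ) ^ (j - 2)) / (T : ℝ) ^ j := by
        apply div_le_div_of_nonneg_right ?_ hTj.le |>.trans_eq rfl
        have : (0 : ℝ) ≤ (j : ℝ) * ((j : ℝ) - 1) ^ 2 := by positivity
        nlinarith [ht2]
    _ = (j : ℝ) * ((j : ℝ) - 1) ^ 2 / (T : ℝ) ^ 2 := by
        rw [hTjsplit]
        field_simp
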